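/- Under the same hypotheses on $\nu$ as above (conditions (H1) with constant $a_1$), for all $0 < r_1 < r_2 < \infty$ one has $\nu(r_1)/\nu(r_2) \le (r_2/r_1)^{3(a_1-1)} e^{3(a_1-1)(r_2-r_1)}$. -/

import Mathlib

set_option maxHeartbeats 1000000


open MeasureTheory Set

theorem levy_density_ratio_bound
    (ν ν' : ℝ → ℝ) (a₁ : ℝ) (ha₁ : 1 ≤ a₁)
    (hpos : ∀ r > (0:ℝ), 0 < ν r)
    (hanti : ∀ u v : ℝ, 0 < u → u ≤ v → ν v ≤ ν u)
    (habs : ∀ r > (0:ℝ), ν r = -∫ ρ in Set.Ioi r, ν' ρ)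
    (hratio : ∀ u v : ℝ, 0 < u → u ≤ v → -ν' v / v ≤ -ν' u / u)
    (hdbl1 : ∀ r : ℝ, 1 ≤ r → ν r ≤ a₁ * ν (r + 1))
    (hdbl2 : ∀ r : ℝ, 0 < r → r ≤ 1 → ν r ≤ a₁ * ν (2 * r)) :
    ∀ r₁ r₂ : ℝ, 0 < r₁ → r₁ < r₂ →
      ν r₁ / ν r₂ ≤ (r₂ / r₁) ^ (3 * (a₁ - 1)) * Real.exp (3 * (a₁ - 1) * (r₂ - r₁)) := by
  intro r₁ r₂ hr₁ hr12
  have hr₂ : 0 < r₂ := hr₁.trans hr12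
  obtain ⟨C, hC⟩ : ∃ C : ℝ, C = 3 * (a₁ - 1) := ⟨_, rfl⟩
  have hC0 : 0 ≤ C := by rw [hC]; linarith
  -- integrability of ν'
  have hint : ∀ x : ℝ, 0 < x → IntegrableOn ν' (Ioi x) := by
    intro x hx
    by_contra hc
    have h1 := habs x hx
    rw [integral_undef hc] at h1
    have := hpos x hx
    rw [h1] at this
    norm_num at this
  have hintf : ∀ x y : ℝ, 0 < x → IntegrableOn (fun s => -ν' s) (Ioc x y) := by
    intro x y hx
    exact ((hint x hx).mono_set Ioc_subset_Ioi_self).neg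
  -- constant integral helper
  have hconst : ∀ x y c : ℝ, x ≤ y → ∫ _ in Ioc x y, c = (y - x) * c := by
    intro x y c hxy
    rw [setIntegral_const, measureReal_def, Real.volume_Ioc, ENNReal.toReal_ofReal (by linarith)]
    simp [smul_eq_mul]
  -- fundamental identity
  have hident : ∀ x y : ℝ, 0 < x → x ≤ y → ν x - ν y = ∫ s in Ioc x y, -ν' s := by
    intro x y hx hxy
    have hy : 0 < y := lt_of_lt_of_le hx hxy
    have hsplit : ∫ s in Ioi x, ν' s = (∫ s in Ioc x y, ν' s) + ∫ s in Ioi y, ν' s := by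
      rw [← setIntegral_union (Ioc_disjoint_Ioi le_rfl) measurableSet_Ioi
        ((hint x hx).mono_set Ioc_subset_Ioi_self) (hint y hy), Ioc_union_Ioi_eq_Ioi hxy]
    rw [habs x hx, habs y hy, hsplit, integral_neg]
    ring
  -- nonnegativity of -ν'
  have hfnn : ∀ s : ℝ, 0 < s → 0 ≤ -ν' s := by
    intro s hs
    by_contra hneg
    push_neg at hneg
    have h1 : ∀ ρ ∈ Ioc s (s + 1), -ν' ρ ≤ -ν' s := by
      rintro ρ ⟨ha, hb⟩
      have hρ : 0 < ρ := hs.trans ha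
      have h2 := hratio s ρ hs ha.le
      rw [div_le_div_iff₀ hρ hs] at h2
      nlinarith
    have h2 : ν s - ν (s + 1) ≤ -ν' s := by
      rw [hident s (s + 1) hs (by linarith)]
      calc ∫ ρ in Ioc s (s + 1), -ν' ρ
          ≤ ∫ _ in Ioc s (s + 1), -ν' s :=
            setIntegral_mono_on (hintf s (s + 1) hs)
              (integrableOn_const (by rw [Real.volume_Ioc]; exact ENNReal.ofReal_ne_top))
              measurableSet_Ioc h1
        _ = -ν' s := by rw [hconst s (s + 1) (-ν' s) (by linarith)]; ring
    have h3 := hanti s (s + 1) hs (by linarith)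
    linarith
  -- lower bound for increments via linear comparison
  have hlin : ∀ x y : ℝ, 0 < x → x ≤ y → -ν' y / y * ((y ^ 2 - x ^ 2) / 2) ≤ ν x - ν y := by
    intro x y hx hxy
    have hy : 0 < y := lt_of_lt_of_le hx hxy
    have hmono : ∀ ρ ∈ Ioc x y, -ν' y / y * ρ ≤ -ν' ρ := by
      rintro ρ ⟨ha, hb⟩
      have hρ : 0 < ρ := hx.trans ha
      have h2 := hratio ρ y hρ hb
      rw [div_le_div_iff₀ hy hρ] at h2
      rw [show -ν' y / y * ρ = -ν' y * ρ / y by ring, div_le_iff₀ hy]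
      linarith
    have heval : ∫ ρ in Ioc x y, -ν' y / y * ρ = -ν' y / y * ((y ^ 2 - x ^ 2) / 2) := by
      rw [← intervalIntegral.integral_of_le hxy, intervalIntegral.integral_const_mul, integral_id]
    rw [hident x y hx hxy, ← heval]
    exact setIntegral_mono_on ((continuous_const.mul continuous_id).integrableOn_Ioc)
      (hintf x y hx) measurableSet_Ioc hmono
  -- pointwise logarithmic derivative bound
  have hptw : ∀ s : ℝ, 0 < s → -ν' s ≤ C * (1 / s + 1) * ν s := by
    intro s hs
    have hνs : 0 ≤ ν s := (hpos s hs).le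
    have hgcomp : ∀ X : ℝ, -ν' s * s ≤ X * ((a₁ - 1) * ν s) → (0 ≤ X) → X ≤ 3 * (1 + s) →
        -ν' s ≤ C * (1 / s + 1) * ν s := by
      intro X hX hX0 hX3
      have hD : 0 ≤ (a₁ - 1) * ν s := mul_nonneg (by linarith) hνs
      have h1 : -ν' s * s ≤ 3 * (1 + s) * ((a₁ - 1) * ν s) := by nlinarith
      have h2 : C * (1 / s + 1) * ν s = C * (1 + s) * ν s / s := by
        field_simp
      rw [h2, le_div_iff₀ hs, hC]
      nlinarith
    rcases le_or_gt s 2 with hs2 | hs2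
    · have hx : 0 < s / 2 := by linarith
      have key := hlin (s / 2) s hx (by linarith)
      have hdb := hdbl2 (s / 2) hx (by linarith)
      rw [show 2 * (s / 2) = s by ring] at hdb
      have hν2 : 0 < ν (s / 2) := hpos _ hx
      have heq : -ν' s / s * ((s ^ 2 - (s / 2) ^ 2) / 2) = -ν' s * s * (3 / 8) := by
        field_simp
        ring
      rw [heq] at key
      apply hgcomp (8 / 3) _ (by norm_num) (by nlinarith)
      linarith
    · have hx : (0:ℝ) < s - 1 := by linarith
      have key := hlin (s - 1) s hx (by linarith)
      have hdb := hdbl1 (s - 1) (by linarith)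
      rw [show s - 1 + 1 = s by ring] at hdb
      have hF0 : 0 ≤ -ν' s := hfnn s hs
      have heq : -ν' s / s * ((s ^ 2 - (s - 1) ^ 2) / 2) = -ν' s * (s - 1 / 2) / s := by
        field_simp
        ring
      rw [heq] at key
      have key' : -ν' s * (s - 1 / 2) ≤ (a₁ - 1) * ν s * s := by
        rw [div_le_iff₀ hs] at key
        nlinarith
      apply hgcomp (4 / 3 * s) _ (by linarith) (by linarith)
      nlinarith [mul_nonneg hF0 (show (0:ℝ) ≤ s / 4 - 1 / 2 by linarith)]
  -- one-step Gronwall estimate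
  have hstep : ∀ x y : ℝ, 0 < x → x ≤ y → (y - x) * (C * (1 / x + 1)) ≤ 1 / 2 →
      ν x ≤ ν y * Real.exp ((y - x) * (C * (1 / x + 1)) + 2 * ((y - x) * (C * (1 / x + 1))) ^ 2) := by
    intro x y hx hxy ht
    set t := (y - x) * (C * (1 / x + 1)) with htdef
    have hy : 0 < y := lt_of_lt_of_le hx hxy
    have ht0 : 0 ≤ t := mul_nonneg (by linarith) (mul_nonneg hC0 (by positivity))
    have hbound : ν x - ν y ≤ t * ν x := by
      rw [hident x y hx hxy]
      have hub : ∀ ρ ∈ Ioc x y, -ν' ρ ≤ C * (1 / x + 1) * ν x := by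
        rintro ρ ⟨ha, hb⟩
        have hρ : 0 < ρ := hx.trans ha
        have h1 := hptw ρ hρ
        have h2 : ν ρ ≤ ν x := hanti x ρ hx ha.le
        have h3 : 1 / ρ ≤ 1 / x := one_div_le_one_div_of_le hx ha.le
        calc -ν' ρ ≤ C * (1 / ρ + 1) * ν ρ := h1
          _ ≤ C * (1 / x + 1) * ν x := by
              apply mul_le_mul (mul_le_mul_of_nonneg_left (by linarith) hC0)
                h2 (hpos ρ hρ).le (mul_nonneg hC0 (by positivity))
      calc ∫ ρ in Ioc x y, -ν' ρ
          ≤ ∫ _ in Ioc x y, C * (1 / x + 1) * ν x :=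
            setIntegral_mono_on (hintf x y hx)
              (integrableOn_const (by rw [Real.volume_Ioc]; exact ENNReal.ofReal_ne_top))
              measurableSet_Ioc hub
        _ = (y - x) * (C * (1 / x + 1) * ν x) := hconst x y _ hxy
        _ = t * ν x := by rw [htdef]; ring
    have hexp : 1 + (t + 2 * t ^ 2) ≤ Real.exp (t + 2 * t ^ 2) := by
      linarith [Real.add_one_le_exp (t + 2 * t ^ 2)]
    have hνx := hpos x hx
    have hνy := hpos y hy
    have h2 : ν x * (1 - t) ≤ ν y := by linarith
    have h3 : ν x * (1 - t) * (1 + (t + 2 * t ^ 2)) ≤ ν y * (1 + (t + 2 * t ^ 2)) :=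
      mul_le_mul_of_nonneg_right h2 (by nlinarith)
    have h4 : ν y * (1 + (t + 2 * t ^ 2)) ≤ ν y * Real.exp (t + 2 * t ^ 2) :=
      mul_le_mul_of_nonneg_left hexp hνy.le
    have h5 : ν x ≤ ν x * (1 - t) * (1 + (t + 2 * t ^ 2)) := by
      nlinarith [mul_nonneg (mul_nonneg hνx.le (sq_nonneg t)) (show (0:ℝ) ≤ 1 - 2 * t by linarith)]
    linarith
  -- main discretization
  obtain ⟨A, hA⟩ : ∃ A : ℝ, A = C * (Real.log (r₂ / r₁) + (r₂ - r₁)) := ⟨_, rfl⟩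
  obtain ⟨M, hM⟩ : ∃ M : ℝ, M = C * (1 / r₁ + 1) := ⟨_, rfl⟩
  have hM0 : 0 ≤ M := hM ▸ mul_nonneg hC0 (by positivity)
  obtain ⟨E, hE⟩ : ∃ E : ℝ, E = C * (r₂ - r₁) ^ 2 / r₁ ^ 2 + 2 * M ^ 2 * (r₂ - r₁) ^ 2 := ⟨_, rfl⟩
  have hkey : ∀ n : ℕ, 1 ≤ n → M * (r₂ - r₁) ≤ (n : ℝ) / 2 →
      ν r₁ ≤ ν r₂ * Real.exp (A + E / n) := by
    intro n hn hncond
    have hn0 : (0:ℝ) < n := by exact_mod_cast hn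
    obtain ⟨h, hh⟩ : ∃ h : ℝ, h = (r₂ - r₁) / n := ⟨_, rfl⟩
    have hh0 : 0 < h := by rw [hh]; exact div_pos (by linarith) hn0
    have hnh : (n : ℝ) * h = r₂ - r₁ := by
      rw [hh]; field_simp
    obtain ⟨X, hX⟩ : ∃ X : ℕ → ℝ, X = fun i : ℕ => r₁ + i * h := ⟨_, rfl⟩
    have hXmono : ∀ i : ℕ, i ≤ n → r₁ ≤ X i ∧ X i ≤ r₂ := by
      intro i hi
      have h1 : (0:ℝ) ≤ (i : ℝ) * h := by positivity
      have h2 : (i : ℝ) * h ≤ (n : ℝ) * h :=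
        mul_le_mul_of_nonneg_right (by exact_mod_cast hi) hh0.le
      constructor
      · simp only [hX]; linarith
      · simp only [hX]; linarith [hnh ▸ h2]
    have hXpos : ∀ i : ℕ, i ≤ n → 0 < X i := fun i hi => lt_of_lt_of_le hr₁ (hXmono i hi).1
    have hXsucc : ∀ k : ℕ, X (k + 1) = X k + h := by
      intro k
      simp only [hX]
      push_cast
      ring
    obtain ⟨τ, hτ⟩ : ∃ τ : ℕ → ℝ, τ = fun i : ℕ => h * (C * (1 / X i + 1)) := ⟨_, rfl⟩
    have hτle : ∀ i : ℕ, i ≤ n → τ i ≤ h * M := by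
      intro i hi
      have h3 : 1 / X i ≤ 1 / r₁ := one_div_le_one_div_of_le hr₁ (hXmono i hi).1
      simp only [hτ, hM]
      apply mul_le_mul_of_nonneg_left _ hh0.le
      apply mul_le_mul_of_nonneg_left (by linarith) hC0
    have hτ0 : ∀ i : ℕ, i ≤ n → 0 ≤ τ i := by
      intro i hi
      have h5 := one_div_pos.2 (hXpos i hi)
      simp only [hτ]
      exact mul_nonneg hh0.le (mul_nonneg hC0 (by linarith))
    have hhM : h * M ≤ 1 / 2 := by
      have : h * M = M * (r₂ - r₁) / n := by rw [hh]; ring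
      rw [this, div_le_iff₀ hn0]
      linarith
    -- telescoping induction
    have hind : ∀ k : ℕ, k ≤ n →
        ν r₁ ≤ ν (X k) * Real.exp (∑ i ∈ Finset.range k, (τ i + 2 * τ i ^ 2)) := by
      intro k
      induction k with
      | zero =>
        intro _
        simp [hX]
      | succ k ih =>
        intro hk
        have hk' : k ≤ n := Nat.le_of_succ_le hk
        have h1 := ih hk'
        have hXk0 : 0 < X k := hXpos k hk'
        have hτk : τ k ≤ 1 / 2 := le_trans (hτle k hk') hhM
        have hτeq : (X (k + 1) - X k) * (C * (1 / X k + 1)) = τ k := by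
          simp only [hτ]
          rw [hXsucc k]
          ring
        have hs := hstep (X k) (X (k + 1)) hXk0 (by rw [hXsucc k]; linarith)
          (by rw [hτeq]; exact hτk)
        rw [hτeq] at hs
        calc ν r₁ ≤ ν (X k) * Real.exp (∑ i ∈ Finset.range k, (τ i + 2 * τ i ^ 2)) := h1
          _ ≤ (ν (X (k + 1)) * Real.exp (τ k + 2 * τ k ^ 2)) *
              Real.exp (∑ i ∈ Finset.range k, (τ i + 2 * τ i ^ 2)) :=
            mul_le_mul_of_nonneg_right hs (Real.exp_pos _).le
          _ = ν (X (k + 1)) * Real.exp (∑ i ∈ Finset.range (k + 1), (τ i + 2 * τ i ^ 2)) := by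
            simp only [Finset.sum_range_succ, Real.exp_add]
            ring
    have hXn : X n = r₂ := by
      simp only [hX]
      linarith [hnh]
    -- bound the exponent sum
    have hterm : ∀ i ∈ Finset.range n, τ i + 2 * τ i ^ 2 ≤
        (C * Real.log (X (i + 1)) - C * Real.log (X i)) + (C * h + E / (n : ℝ) ^ 2) := by
      intro i hi
      have hi' : i < n := Finset.mem_range.1 hi
      have hXi : 0 < X i := hXpos i hi'.le
      have hXi1 : 0 < X (i + 1) := hXpos (i + 1) hi'
      have hXs : X (i + 1) = X i + h := hXsucc i
      have hr₁Xi : r₁ ≤ X i := (hXmono i hi'.le).1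
      have hr₁Xi1 : r₁ ≤ X (i + 1) := (hXmono (i + 1) hi').1
      have hlog : h / X (i + 1) ≤ Real.log (X (i + 1)) - Real.log (X i) := by
        have h1 := Real.log_le_sub_one_of_pos (show 0 < X i / X (i + 1) by positivity)
        rw [Real.log_div hXi.ne' hXi1.ne'] at h1
        have h2 : X i / X (i + 1) - 1 = -(h / X (i + 1)) := by
          rw [hXs]
          field_simp
          ring
        linarith
      have hfrac : 1 / X i ≤ 1 / X (i + 1) + h / r₁ ^ 2 := by
        have h1 : 1 / X i - 1 / X (i + 1) = h / (X i * X (i + 1)) := by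
          rw [hXs]
          field_simp
          ring
        have h2 : h / (X i * X (i + 1)) ≤ h / r₁ ^ 2 := by
          gcongr
          nlinarith
        linarith
      have hτi : τ i = C * h * (1 / X i) + C * h := by simp only [hτ]; ring
      have hτsq : 2 * τ i ^ 2 ≤ 2 * (h * M) ^ 2 := by
        have := hτle i hi'.le
        have := hτ0 i hi'.le
        nlinarith
      have hEn : C * h ^ 2 / r₁ ^ 2 + 2 * (h * M) ^ 2 = E / (n : ℝ) ^ 2 := by
        rw [hE, hh]
        field_simp
      have hmain : C * h * (1 / X i) ≤ C * (Real.log (X (i + 1)) - Real.log (X i)) + C * h ^ 2 / r₁ ^ 2 := by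
        have h1 : h * (1 / X i) ≤ (Real.log (X (i + 1)) - Real.log (X i)) + h ^ 2 / r₁ ^ 2 := by
          have h2 : h * (1 / X i) ≤ h * (1 / X (i + 1) + h / r₁ ^ 2) :=
            mul_le_mul_of_nonneg_left hfrac hh0.le
          have h4 : h * (1 / X (i + 1) + h / r₁ ^ 2) = h / X (i + 1) + h ^ 2 / r₁ ^ 2 := by
            ring
          rw [h4] at h2
          linarith [hlog, h2]
        calc C * h * (1 / X i) = C * (h * (1 / X i)) := by ring
          _ ≤ C * ((Real.log (X (i + 1)) - Real.log (X i)) + h ^ 2 / r₁ ^ 2) :=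
            mul_le_mul_of_nonneg_left h1 hC0
          _ = C * (Real.log (X (i + 1)) - Real.log (X i)) + C * h ^ 2 / r₁ ^ 2 := by ring
      rw [← hEn]
      linarith [hmain, hτsq, hτi]
    have hsum : ∑ i ∈ Finset.range n, (τ i + 2 * τ i ^ 2) ≤ A + E / n := by
      calc ∑ i ∈ Finset.range n, (τ i + 2 * τ i ^ 2)
          ≤ ∑ i ∈ Finset.range n, ((C * Real.log (X (i + 1)) - C * Real.log (X i)) + (C * h + E / (n : ℝ) ^ 2)) :=
            Finset.sum_le_sum hterm
        _ = (C * Real.log (X n) - C * Real.log (X 0)) + n * (C * h + E / (n : ℝ) ^ 2) := by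
            rw [Finset.sum_add_distrib, Finset.sum_range_sub (fun i => C * Real.log (X i)) n,
              Finset.sum_const, Finset.card_range, nsmul_eq_mul]
        _ = A + E / n := by
            have hX0 : X 0 = r₁ := by simp [hX]
            rw [hXn, hX0, hA, Real.log_div hr₂.ne' hr₁.ne', hh]
            have hn' : (n:ℝ) ≠ 0 := hn0.ne'
            field_simp
            ring
    have hfin := hind n le_rfl
    rw [hXn] at hfin
    calc ν r₁ ≤ ν r₂ * Real.exp (∑ i ∈ Finset.range n, (τ i + 2 * τ i ^ 2)) := hfin
      _ ≤ ν r₂ * Real.exp (A + E / n) :=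
        mul_le_mul_of_nonneg_left (Real.exp_le_exp.2 hsum) (hpos r₂ hr₂).le
  -- pass to the limit
  have hlim : Filter.Tendsto (fun n : ℕ => ν r₂ * Real.exp (A + E / n)) Filter.atTop
      (nhds (ν r₂ * Real.exp A)) := by
    have h1 : Filter.Tendsto (fun n : ℕ => A + E / n) Filter.atTop (nhds (A + 0)) :=
      Filter.Tendsto.const_add A (tendsto_const_div_atTop_nhds_zero_nat E)
    rw [add_zero] at h1
    exact ((Real.continuous_exp.tendsto A).comp h1).const_mul (ν r₂)
  have hfinal : ν r₁ ≤ ν r₂ * Real.exp A := by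
    apply ge_of_tendsto hlim
    filter_upwards [Filter.eventually_ge_atTop (max 1 ⌈2 * (M * (r₂ - r₁))⌉₊)] with n hn
    have hn1 : 1 ≤ n := le_trans (le_max_left _ _) hn
    have hn2 : (⌈2 * (M * (r₂ - r₁))⌉₊ : ℕ) ≤ n := le_trans (le_max_right _ _) hn
    have hn3 : 2 * (M * (r₂ - r₁)) ≤ (n : ℝ) :=
      le_trans (Nat.le_ceil _) (by exact_mod_cast hn2)
    exact hkey n hn1 (by linarith)
  -- conclusion
  have hν₂ := hpos r₂ hr₂
  rw [div_le_iff₀ hν₂]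
  calc ν r₁ ≤ ν r₂ * Real.exp A := hfinal
    _ = (r₂ / r₁) ^ (3 * (a₁ - 1)) * Real.exp (3 * (a₁ - 1) * (r₂ - r₁)) * ν r₂ := by
        rw [Real.rpow_def_of_pos (by positivity : (0:ℝ) < r₂ / r₁), ← Real.exp_add, hA, hC,
          show Real.log (r₂ / r₁) * (3 * (a₁ - 1)) + 3 * (a₁ - 1) * (r₂ - r₁)
            = 3 * (a₁ - 1) * (Real.log (r₂ / r₁) + (r₂ - r₁)) from by ring]
        ring
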